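/- If Φ is a Parseval frame for F^N with M vectors and 1 ≤ k ≤ N, then the sum over all subsets K ⊆ [M] with |K| = k of det(Φ_K* Φ_K) equals the binomial coefficient C(N,k). -/

import Mathlib

open Matrix Finset Polynomial


noncomputable def colSub {N M : ℕ} (Φ : Matrix (Fin N) (Fin M) ℂ) (K : Finset (Fin M)) :
    Matrix (Fin N) ↥K ℂ := Φ.submatrix id (fun k => (k : Fin M))

/-- The k-dimensional volume of the parallelotope spanned by the columns of Φ indexed by K. -/
noncomputable def vol {N M : ℕ} (Φ : Matrix (Fin N) (Fin M) ℂ) (K : Finset (Fin M)) : ℝ :=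
  Real.sqrt (((colSub Φ K)ᴴ * colSub Φ K).det.re)

lemma det_piecewise {n : Type*} [Fintype n] [DecidableEq n] {R : Type*} [CommRing R]
    (A : Matrix n n R) (s : Finset n) :
    Matrix.det (Matrix.of (s.piecewise A (1 : Matrix n n R))) =
      (A.submatrix (fun i : s => (i : n)) (fun i : s => (i : n))).det := by
  classical
  let e : {x // x ∈ s} ⊕ {x // x ∉ s} ≃ n := Equiv.sumCompl (· ∈ s)
  rw [← Matrix.det_submatrix_equiv_self e]
  have hblock : (Matrix.of (s.piecewise A (1 : Matrix n n R))).submatrix e e =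
      Matrix.fromBlocks
        (A.submatrix (fun i : {x // x ∈ s} => (i : n)) (fun i : {x // x ∈ s} => (i : n)))
        (A.submatrix (fun i : {x // x ∈ s} => (i : n)) (fun i : {x // x ∉ s} => (i : n)))
        0 (1 : Matrix {x // x ∉ s} {x // x ∉ s} R) := by
    ext i j
    cases i with
    | inl i =>
      cases j with
      | inl j => simp [e, Finset.piecewise, i.2]
      | inr j => simp [e, Finset.piecewise, i.2]
    | inr i =>
      cases j with
      | inl j =>
        have : (i : n) ≠ (j : n) := fun h => i.2 (h ▸ j.2)
        simp [e, Finset.piecewise, i.2, Matrix.one_apply_ne this]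
      | inr j =>
        simp only [Matrix.submatrix_apply, Matrix.of_apply, e, Equiv.sumCompl_apply_inr,
          Finset.piecewise, if_neg i.2, Matrix.fromBlocks_apply₂₂]
        by_cases h : (i : n) = (j : n)
        · have : i = j := Subtype.ext h
          subst this; simp
        · rw [Matrix.one_apply_ne h, Matrix.one_apply_ne (fun hh => h (congrArg _ hh))]
  rw [hblock, Matrix.det_fromBlocks_zero₂₁, Matrix.det_one, mul_one]

lemma det_one_add_eq_sum {n : Type*} [Fintype n] [DecidableEq n] {R : Type*} [CommRing R]
    (A : Matrix n n R) :
    (1 + A).det = ∑ s : Finset n,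
      (A.submatrix (fun i : s => (i : n)) (fun i : s => (i : n))).det := by
  have h := (Matrix.detRowAlternating (R := R) (n := n)).toMultilinearMap.map_add_univ A
    (1 : Matrix n n R)
  have h1 : (1 + A).det = ∑ s : Finset n,
      Matrix.det (Matrix.of (s.piecewise A (1 : Matrix n n R))) := by
    rw [add_comm]
    exact h
  rw [h1]
  exact Finset.sum_congr rfl fun s _ => det_piecewise A s

/-- The sum of the squared k-dimensional volumes of a Parseval frame equals C(N,k). -/
theorem sum_sq_volumes {N M k : ℕ} (hk : 1 ≤ k) (hkN : k ≤ N)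
    (Φ : Matrix (Fin N) (Fin M) ℂ) (hΦ : Φ * Φᴴ = 1) :
    ∑ K ∈ Finset.powersetCard k (Finset.univ : Finset (Fin M)),
        ((colSub Φ K)ᴴ * colSub Φ K).det = (N.choose k : ℂ) := by
  classical
  set G : Matrix (Fin M) (Fin M) ℂ := Φᴴ * Φ with hG
  have hsub : ∀ K : Finset (Fin M), (colSub Φ K)ᴴ * colSub Φ K
      = G.submatrix (fun i : K => (i : Fin M)) (fun i : K => (i : Fin M)) := by
    intro K; ext i j
    simp [colSub, Matrix.mul_apply, Matrix.conjTranspose_apply, hG]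
  have key : (1 + (X : ℂ[X]) • G.map (C : ℂ →+* ℂ[X])).det = (1 + X) ^ N := by
    have h1 : (1 + (X : ℂ[X]) • G.map (C : ℂ →+* ℂ[X]))
        = 1 + ((X : ℂ[X]) • (Φᴴ.map (C : ℂ →+* ℂ[X]))) * (Φ.map (C : ℂ →+* ℂ[X])) := by
      rw [Matrix.smul_mul, ← Matrix.map_mul]
    have h2 : (Φ.map (C : ℂ →+* ℂ[X])) * ((X : ℂ[X]) • (Φᴴ.map (C : ℂ →+* ℂ[X])))
        = (X : ℂ[X]) • (1 : Matrix (Fin N) (Fin N) ℂ[X]) := by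
      rw [Matrix.mul_smul, ← Matrix.map_mul, hΦ, Matrix.map_one _ (map_zero _) (map_one _)]
    have h3 : (1 + (X : ℂ[X]) • (1 : Matrix (Fin N) (Fin N) ℂ[X]))
        = ((1 + X : ℂ[X]) • (1 : Matrix (Fin N) (Fin N) ℂ[X])) := by
      rw [add_smul, one_smul]
    rw [h1, Matrix.det_one_add_mul_comm, h2, h3, Matrix.det_smul, Matrix.det_one, mul_one,
      Fintype.card_fin]
  have expand : (1 + (X : ℂ[X]) • G.map (C : ℂ →+* ℂ[X])).det
      = ∑ s : Finset (Fin M),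
          (Polynomial.monomial s.card (((colSub Φ s)ᴴ * colSub Φ s).det)) := by
    rw [det_one_add_eq_sum]
    refine Finset.sum_congr rfl fun s _ => ?_
    have hsm : (((X : ℂ[X]) • G.map (C : ℂ →+* ℂ[X])).submatrix
          (fun i : s => (i : Fin M)) (fun i : s => (i : Fin M)))
        = (X : ℂ[X]) • ((G.submatrix (fun i : s => (i : Fin M))
            (fun i : s => (i : Fin M))).map (C : ℂ →+* ℂ[X])) := rfl
    rw [hsm, Matrix.det_smul,
      show ((G.submatrix (fun i : s => (i : Fin M)) (fun i : s => (i : Fin M))).map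
          (⇑(C : ℂ →+* ℂ[X]))) = (C : ℂ →+* ℂ[X]).mapMatrix
          (G.submatrix (fun i : s => (i : Fin M)) (fun i : s => (i : Fin M))) from rfl,
      ← RingHom.map_det, Fintype.card_coe, hsub s,
      ← Polynomial.C_mul_X_pow_eq_monomial, mul_comm]
  have hcoeff := congrArg (fun p : ℂ[X] => p.coeff k) (expand.symm.trans key)
  simp only [Polynomial.finset_sum_coeff, Polynomial.coeff_monomial,
    Polynomial.coeff_one_add_X_pow] at hcoeff
  rw [← hcoeff, Finset.powersetCard_eq_filter, Finset.powerset_univ, Finset.sum_filter]
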